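/- Let (f̂*, ĝ*) be a Sinkhorn fixed point, i.e. f̂* = −ε·LSE_row(S_X(ĝ*)) and ĝ* = −ε·LSE_row(S_Y(f̂*)), and write P* = P(f̂*, ĝ*) and S_X* = S_X(ĝ*). Then the barycentric projection admits the attention form diag(a)⁻¹·P*·Y = Softmax_row(S_X*)·Y, i.e. T_ε(x_i) := (1/a_i)·Σ_j P*_{ij} y_j equals the i-th row of Softmax_row(S_X*)·Y; moreover, for each i, 2·a_i·(x_i − T_ε(x_i)) = 2·Σ_j P*_{ij}·(x_i − y_j), so the gradient expression 2·diag(a)·(X − Softmax_row(S_X*)·Y) equals 2·(diag(a)·X − P*·Y). -/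

import Mathlib

/-- Barycentric projection and gradient of entropic OT in attention form.
At a Sinkhorn fixed point `(f̂*, ĝ*)` with coupling `P* = P(f̂*, ĝ*)` and
scores `S_X* = S_X(ĝ*)`: (i) `diag(a)⁻¹ P* Y = Softmax_row(S_X*) Y`
(the barycentric projection `T_ε(x_i) = (1/a_i) Σ_j P*_{ij} y_j` equals the
`i`-th row of the attention output); (ii) for each `i`,
`2 a_i (x_i − T_ε(x_i)) = 2 Σ_j P*_{ij}(x_i − y_j)`, so the residual-attention
gradient `2 diag(a)(X − Softmax_row(S_X*) Y)` equals `2(diag(a) X − P* Y)`. -/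
theorem barycentric_projection_attention_form
    (n m d : ℕ) (hn : 0 < n) (hm : 0 < m) (hd : 0 < d)
    (X : Fin n → Fin d → ℝ) (Y : Fin m → Fin d → ℝ)
    (ε : ℝ) (hε : 0 < ε)
    (a : Fin n → ℝ) (b : Fin m → ℝ)
    (ha : ∀ i, 0 < a i) (hb : ∀ j, 0 < b j)
    (fh : Fin n → ℝ) (gh : Fin m → ℝ)
    (QK : Fin n → Fin m → ℝ) (hQK : ∀ i j, QK i j = 2 * ∑ t, X i t * Y j t)
    (SX : Fin n → Fin m → ℝ)
    (hSX : ∀ i j, SX i j = (QK i j + gh j + ε * Real.log (b j)) / ε)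
    (SY : Fin m → Fin n → ℝ)
    (hSY : ∀ j i, SY j i = (QK i j + fh i + ε * Real.log (a i)) / ε)
    (P : Fin n → Fin m → ℝ)
    (hP : ∀ i j, P i j = a i * b j * Real.exp ((fh i + gh j + QK i j) / ε))
    (hfix_f : ∀ i, fh i = -ε * Real.log (∑ j, Real.exp (SX i j)))
    (hfix_g : ∀ j, gh j = -ε * Real.log (∑ i, Real.exp (SY j i)))
    (T : Fin n → Fin d → ℝ)
    (hT : ∀ i t, T i t = (1 / a i) * ∑ j, P i j * Y j t) :
    -- (i) barycentric projection equals the attention output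
    (∀ i t, T i t
        = ∑ j, (Real.exp (SX i j) / ∑ k, Real.exp (SX i k)) * Y j t)
    -- (ii) the weighted residual equals the transport residual
    ∧ (∀ i t, 2 * a i * (X i t - T i t)
        = 2 * ∑ j, P i j * (X i t - Y j t))
    -- hence the two gradient expressions coincide entrywise
    ∧ (∀ i t,
        2 * a i * (X i t
            - ∑ j, (Real.exp (SX i j) / ∑ k, Real.exp (SX i k)) * Y j t)
        = 2 * (a i * X i t - ∑ j, P i j * Y j t)) := by

  have hmne : Nonempty (Fin m) := ⟨⟨0, hm⟩⟩
  have hSpos : ∀ i, 0 < ∑ k, Real.exp (SX i k) := fun i =>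
    Finset.sum_pos (fun k _ => Real.exp_pos _) Finset.univ_nonempty
  have key : ∀ i j, P i j = a i * Real.exp (SX i j) / ∑ k, Real.exp (SX i k) := by
    intro i j
    have hexpSX : Real.exp (SX i j) = b j * Real.exp ((QK i j + gh j) / ε) := by
      rw [hSX, show (QK i j + gh j + ε * Real.log (b j)) / ε
          = Real.log (b j) + (QK i j + gh j) / ε by field_simp; ring,
        Real.exp_add, Real.exp_log (hb j)]
    have hexpf : Real.exp (fh i / ε) = (∑ k, Real.exp (SX i k))⁻¹ := by
      rw [hfix_f, show -ε * Real.log (∑ j, Real.exp (SX i j)) / ε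
          = -Real.log (∑ j, Real.exp (SX i j)) by field_simp,
        Real.exp_neg, Real.exp_log (hSpos i)]
    have hsplit : (fh i + gh j + QK i j) / ε = fh i / ε + (QK i j + gh j) / ε := by
      field_simp; ring
    rw [hP, hsplit, Real.exp_add, hexpf, hexpSX]
    rw [div_eq_mul_inv]
    ring
  have keyT : ∀ i t, T i t
      = ∑ j, (Real.exp (SX i j) / ∑ k, Real.exp (SX i k)) * Y j t := by
    intro i t
    rw [hT, Finset.mul_sum]
    refine Finset.sum_congr rfl fun j _ => ?_
    rw [key]
    have hai := (ha i).ne'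
    have hS := (hSpos i).ne'
    field_simp
  have hsum : ∀ i, ∑ j, P i j = a i := by
    intro i
    have : ∑ j, P i j = a i * (∑ j, Real.exp (SX i j)) / ∑ k, Real.exp (SX i k) := by
      rw [Finset.mul_sum, Finset.sum_div]
      exact Finset.sum_congr rfl fun j _ => by rw [key, mul_div_assoc]
    rw [this, mul_div_assoc, div_self (ne_of_gt (hSpos i)), mul_one]
  refine ⟨keyT, fun i t => ?_, fun i t => ?_⟩
  · have : ∑ j, P i j * (X i t - Y j t)
        = (∑ j, P i j) * X i t - ∑ j, P i j * Y j t := by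
      rw [Finset.sum_mul, ← Finset.sum_sub_distrib]
      exact Finset.sum_congr rfl fun j _ => by ring
    rw [this, hsum, hT]
    have hai := (ha i).ne'
    field_simp
  · rw [← keyT, hT]
    have hai := (ha i).ne'
    field_simp
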